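/- Let F₂ be the free group on x and y. Define elements a₁ = x³, b₁ = y³, and recursively aₛ = x⁻¹ b_{s-1} x and bₛ = y⁻¹ a_{s-1} y for s ≥ 2. Then for every n ≥ 1, the 2n elements a₁, b₁, ..., aₙ, bₙ form a free basis of a free subgroup of F₂ of rank 2n. -/

import Mathlib

/-!
Statement 5: in the free group `F₂` on `x, y`, with `a₁ = x³`, `b₁ = y³` and
`aₛ = x⁻¹ b_{s-1} x`, `bₛ = y⁻¹ a_{s-1} y` for `s ≥ 2`, for every `n ≥ 1` the `2n`
elements `a₁, b₁, …, aₙ, bₙ` form a free basis of a free subgroup of rank `2n`.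
Expressed via injectivity of the lift `FreeGroup (Fin n ⊕ Fin n) →* F₂`
(`Sum.inl i ↦ a_{i+1}`, `Sum.inr i ↦ b_{i+1}`).
-/

open FreeGroup List
variable {α : Type*} [DecidableEq α]

/-- relation: b does not cancel a -/
def NC (a b : α × Bool) : Prop := b ≠ (a.1, !a.2)

theorem reduce_eq_self_iff (L : List (α × Bool)) : reduce L = L ↔ List.IsChain NC L := by
  induction L with
  | nil => simp
  | cons a L ih =>
    rw [reduce.cons]
    constructor
    · intro h
      cases hr : reduce L with
      | nil =>
        rw [hr] at h
        simp at h
        subst h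
        simp [List.isChain_singleton]
      | cons hd tl =>
        rw [hr] at h
        by_cases hc : a.1 = hd.1 ∧ a.2 = !hd.2
        · simp only [if_pos hc] at h
          exfalso
          have h1 : (reduce L).length ≤ L.length := Red.length_le reduce.red
          rw [hr] at h1
          have : tl.length = L.length + 1 := by rw [h]; simp
          simp at h1
          omega
        · simp only [if_neg hc] at h
          have hL : L = hd :: tl := (List.tail_eq_of_cons_eq h.symm)
          have hred : reduce L = L := by rw [hr, hL]
          subst hL
          refine List.isChain_cons_cons.mpr ⟨?_, ih.mp hred⟩
          intro hcon
          exact hc ⟨by simp [hcon], by simp [hcon]⟩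
    · intro h
      have hL : reduce L = L := ih.mpr h.tail
      rw [hL]
      cases L with
      | nil => rfl
      | cons b L' =>
        have hnc : NC a b := (List.isChain_cons_cons.mp h).1
        have : ¬ (a.1 = b.1 ∧ a.2 = !b.2) := by
          rintro ⟨h1, h2⟩
          exact hnc (by ext <;> simp [h1, h2])
        simp [this]

theorem toWord_mk_of_chain {L : List (α × Bool)} (h : List.IsChain NC L) :
    (FreeGroup.mk L).toWord = L := by
  rw [toWord_mk, (reduce_eq_self_iff L).mpr h]

theorem chain_toWord (g : FreeGroup α) : List.IsChain NC g.toWord :=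
  (reduce_eq_self_iff _).mp (reduce_toWord g)

theorem invRev_append' (L1 L2 : List (α × Bool)) :
    invRev (L1 ++ L2) = invRev L2 ++ invRev L1 := by simp [invRev]

/-- bar of a letter -/
def bar (e : α × Bool) : α × Bool := (e.1, !e.2)

@[simp] theorem bar_bar (e : α × Bool) : bar (bar e) = e := by simp [bar]

theorem invRev_singleton (e : α × Bool) : invRev [e] = [bar e] := by simp [invRev, bar]

/-- The core ping-pong cancellation lemma. -/
theorem core {U : List (α × Bool)} {e : α × Bool}
    (hU : List.IsChain NC U) (hlast : ∀ a ∈ U.getLast?, a.1 ≠ e.1)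
    (h : FreeGroup α)
    (hy : ¬ (U ++ [bar e, bar e] <+: h.toWord)) :
    U ++ [e, e] <+: (FreeGroup.mk (U ++ [e, e, e] ++ invRev U) * h).toWord := by
  classical
  have hlastNC : ∀ f : α × Bool, f.1 = e.1 → ∀ a ∈ U.getLast?, NC a f := by
    intro f hf a ha hcon
    exact hlast a ha (by rw [← hf, hcon])
  have hUe : ∀ f : α × Bool, f.1 = e.1 → List.IsChain NC (U ++ [f]) := by
    intro f hf
    apply List.isChain_append.mpr
    refine ⟨hU, List.isChain_singleton f, ?_⟩
    intro a ha z hz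
    simp only [List.head?_cons, Option.mem_def, Option.some.injEq] at hz
    subst hz
    exact hlastNC f hf a ha
  have hNCee : ∀ f : α × Bool, NC f f := by
    intro f hcon
    have := congrArg Prod.snd hcon
    simp at this
  -- g = mk (U ++ [e,e]) * t   where t = mk ([e] ++ invRev U)
  set t : FreeGroup α := FreeGroup.mk ([e] ++ invRev U) with ht
  have hg : FreeGroup.mk (U ++ [e, e, e] ++ invRev U)
      = FreeGroup.mk (U ++ [e, e]) * t := by
    rw [ht, mul_mk]
    congr 1
    simp
  have htinv : t⁻¹ = FreeGroup.mk (U ++ [bar e]) := by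
    rw [ht, inv_mk, invRev_append', invRev_invRev, invRev_singleton]
  set D : List (α × Bool) := (t * h).toWord with hD
  have hDchain : List.IsChain NC D := chain_toWord _
  have hth : t * h = FreeGroup.mk D := (mk_toWord).symm
  by_cases hhead : D.head? = some (bar e)
  · -- contradiction with hy
    exfalso
    apply hy
    obtain ⟨D', hD'⟩ : ∃ D', D = bar e :: D' := by
      cases hcase : D with
      | nil => rw [hcase] at hhead; simp at hhead
      | cons d D' =>
        rw [hcase] at hhead
        simp only [List.head?_cons, Option.some.injEq] at hhead
        exact ⟨D', by rw [hhead]⟩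
    have hh : h = FreeGroup.mk ((U ++ [bar e]) ++ D) := by
      have h2 : h = t⁻¹ * (t * h) := by group
      rw [h2, htinv, hth, mul_mk]
    have hchain : List.IsChain NC ((U ++ [bar e]) ++ D) := by
      apply List.isChain_append.mpr
      refine ⟨hUe (bar e) rfl, hDchain, ?_⟩
      intro a ha z hz
      rw [List.getLast?_concat, Option.mem_def, Option.some.injEq] at ha
      rw [hD', List.head?_cons, Option.mem_def, Option.some.injEq] at hz
      subst ha; subst hz
      exact hNCee (bar e)
    have : h.toWord = (U ++ [bar e]) ++ D := by
      rw [hh]; exact toWord_mk_of_chain hchain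
    rw [this, hD']
    exact ⟨D', by simp⟩
  · -- main case
    have hgh : FreeGroup.mk (U ++ [e, e, e] ++ invRev U) * h
        = FreeGroup.mk ((U ++ [e, e]) ++ D) := by
      rw [hg, mul_assoc, hth, mul_mk]
    have hchain : List.IsChain NC ((U ++ [e, e]) ++ D) := by
      apply List.isChain_append.mpr
      refine ⟨?_, hDchain, ?_⟩
      · have : U ++ [e, e] = (U ++ [e]) ++ [e] := by simp
        rw [this]
        apply List.isChain_append.mpr
        refine ⟨hUe e rfl, List.isChain_singleton e, ?_⟩
        intro a ha z hz
        rw [List.getLast?_concat, Option.mem_def, Option.some.injEq] at ha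
        simp only [List.head?_cons, Option.mem_def, Option.some.injEq] at hz
        subst ha; subst hz
        exact hNCee e
      · intro a ha z hz
        rw [show U ++ [e,e] = (U ++ [e]) ++ [e] by simp, List.getLast?_concat,
          Option.mem_def, Option.some.injEq] at ha
        rw [Option.mem_def] at hz
        subst ha
        intro hcon
        apply hhead
        rw [hz, hcon]
        rfl
    rw [hgh, toWord_mk_of_chain hchain]
    exact ⟨D, by simp⟩


namespace Stmt5

abbrev F2 := FreeGroup (Fin 2)

def x : F2 := FreeGroup.of 0
def y : F2 := FreeGroup.of 1

/-- `ab s = (a_{s+1}, b_{s+1})` (0-based). -/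
def ab : ℕ → F2 × F2
  | 0 => (x ^ 3, y ^ 3)
  | s + 1 => (x⁻¹ * (ab s).2 * x, y⁻¹ * (ab s).1 * y)

def gen (k : ℕ) : Fin 2 := ⟨k % 2, Nat.mod_lt _ two_pos⟩

def ltr (k : ℕ) (b : Bool) : Fin 2 × Bool := (gen k, b)

theorem gen_add_two (k : ℕ) : gen (k + 2) = gen k := by
  simp [gen, Nat.add_mod]

theorem gen_succ_ne (k : ℕ) : gen (k + 1) ≠ gen k := by
  simp only [gen, ne_eq, Fin.mk.injEq]
  omega

theorem ltr_add_two (k : ℕ) (b : Bool) : ltr (k + 2) b = ltr k b := by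
  simp [ltr, gen_add_two]

def U (o s : ℕ) : List (Fin 2 × Bool) := (List.range s).map (fun k => ltr (k + o) false)

def P (o s : ℕ) (σ : Bool) : List (Fin 2 × Bool) := U o s ++ [ltr (s + o) σ, ltr (s + o) σ]

def W (o s : ℕ) : List (Fin 2 × Bool) :=
  U o s ++ [ltr (s + o) true, ltr (s + o) true, ltr (s + o) true] ++ FreeGroup.invRev (U o s)

theorem U_zero_succ (s : ℕ) : U 0 (s + 1) = ltr 0 false :: U 1 s := by
  simp [U, List.range_succ_eq_map, List.map_map, Function.comp_def]

theorem U_one_succ (s : ℕ) : U 1 (s + 1) = ltr 1 false :: U 0 s := by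
  simp only [U, List.range_succ_eq_map, List.map_cons, List.map_map, Function.comp_def]
  congr 1
  apply List.map_congr_left
  intro k _
  rw [show k + 1 + 1 = k + 2 by ring, show k + 2 + 0 = k + 0 + 2 by ring, ltr_add_two,
    Nat.add_zero]

theorem invRev_cons (a : Fin 2 × Bool) (L : List (Fin 2 × Bool)) :
    FreeGroup.invRev (a :: L) = FreeGroup.invRev L ++ [bar a] := by
  simp [FreeGroup.invRev, bar]

theorem bar_ltr (k : ℕ) (b : Bool) : bar (ltr k b) = ltr k (!b) := rfl

theorem ab_eq (s : ℕ) : (ab s).1 = FreeGroup.mk (W 0 s) ∧ (ab s).2 = FreeGroup.mk (W 1 s) := by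
  induction s with
  | zero =>
    constructor
    · show x ^ 3 = _
      rw [pow_succ, pow_succ, pow_one]
      have hx : x = FreeGroup.mk [ltr 0 true] := rfl
      rw [hx, FreeGroup.mul_mk, FreeGroup.mul_mk]
      rfl
    · show y ^ 3 = _
      rw [pow_succ, pow_succ, pow_one]
      have hy : y = FreeGroup.mk [ltr 1 true] := rfl
      rw [hy, FreeGroup.mul_mk, FreeGroup.mul_mk]
      rfl
  | succ s ih =>
    have hx : x = FreeGroup.mk [ltr 0 true] := rfl
    have hxi : x⁻¹ = FreeGroup.mk [ltr 0 false] := rfl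
    have hy : y = FreeGroup.mk [ltr 1 true] := rfl
    have hyi : y⁻¹ = FreeGroup.mk [ltr 1 false] := rfl
    constructor
    · show x⁻¹ * (ab s).2 * x = _
      rw [ih.2, hxi, hx, FreeGroup.mul_mk, FreeGroup.mul_mk]
      congr 1
      rw [W, W, U_zero_succ, invRev_cons, bar_ltr]
      simp [show s + 1 + 0 = s + 1 by ring]
    · show y⁻¹ * (ab s).1 * y = _
      rw [ih.1, hyi, hy, FreeGroup.mul_mk, FreeGroup.mul_mk]
      congr 1
      rw [W, W, U_one_succ, invRev_cons, bar_ltr]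
      simp only [show s + 1 + 1 = s + 0 + 2 by ring, ltr_add_two]
      simp

theorem NC_of_snd_eq {a b : Fin 2 × Bool} (h : b.2 = a.2) : NC a b := by
  intro hcon
  rw [hcon] at h
  simp at h

theorem NC_of_fst_ne {a b : Fin 2 × Bool} (h : b.1 ≠ a.1) : NC a b := by
  intro hcon
  rw [hcon] at h
  simp at h

theorem chain_U (o s : ℕ) : List.IsChain NC (U o s) := by
  rw [U, List.isChain_map]
  apply List.Pairwise.isChain
  apply List.Pairwise.imp ?_ (List.pairwise_lt_range (n := s))
  intro a b _
  exact NC_of_snd_eq rfl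

theorem lastU (o s : ℕ) : ∀ a ∈ (U o s).getLast?, a.1 ≠ gen (s + o) := by
  cases s with
  | zero => simp [U]
  | succ s =>
    intro a ha
    rw [show U o (s+1) = U o s ++ [ltr (s + o) false] by
        simp [U, List.range_succ], List.getLast?_concat, Option.mem_def,
      Option.some.injEq] at ha
    subst ha
    show gen (s + o) ≠ gen (s + 1 + o)
    rw [show s + 1 + o = (s + o) + 1 by ring]
    exact (gen_succ_ne _).symm

theorem chain_P (o s : ℕ) (σ : Bool) : List.IsChain NC (P o s σ) := by
  rw [P]
  apply List.isChain_append.mpr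
  refine ⟨chain_U o s, List.isChain_pair.mpr (NC_of_snd_eq rfl), ?_⟩
  intro a ha z hz
  simp only [List.head?_cons, Option.mem_def, Option.some.injEq] at hz
  subst hz
  exact NC_of_fst_ne (Ne.symm (lastU o s a ha))

theorem length_P (o s : ℕ) (σ : Bool) : (P o s σ).length = s + 2 := by
  simp [P, U]

theorem getElem_P_lt (o s : ℕ) (σ : Bool) {m : ℕ} (hm : m < s) :
    (P o s σ)[m]'(by rw [length_P]; omega) = ltr (m + o) false := by
  simp only [P]
  rw [List.getElem_append_left (by simp [U]; omega)]
  simp [U]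

theorem getElem_P_ge (o s : ℕ) (σ : Bool) {m : ℕ} (hm : s ≤ m) (hm2 : m < s + 2) :
    (P o s σ)[m]'(by rw [length_P]; omega) = ltr (s + o) σ := by
  simp only [P]
  rw [List.getElem_append_right (by simp [U]; omega)]
  have hl : (U o s).length = s := by simp [U]
  have h0 : m - (U o s).length = 0 ∨ m - (U o s).length = 1 := by rw [hl]; omega
  rcases h0 with h0 | h0 <;> simp [h0]

theorem fst_getElem_P_zero (o s : ℕ) (σ : Bool) :
    ((P o s σ)[0]'(by rw [length_P]; omega)).1 = gen o := by
  cases Nat.eq_zero_or_pos s with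
  | inl h =>
    subst h
    rw [getElem_P_ge o 0 σ (le_refl 0) (by omega)]
    simp [ltr]
  | inr h =>
    rw [getElem_P_lt o s σ h]
    simp [ltr]

theorem aux_lt {o s1 s2 : ℕ} (σ1 σ2 : Bool) (hlt : s1 < s2) :
    ∃ m, ∃ (h1 : m < (P o s1 σ1).length) (h2 : m < (P o s2 σ2).length),
      (P o s1 σ1)[m] ≠ (P o s2 σ2)[m] := by
  cases σ1 with
  | true =>
    refine ⟨s1, by rw [length_P]; omega, by rw [length_P]; omega, ?_⟩
    rw [getElem_P_ge o s1 true (le_refl s1) (by omega), getElem_P_lt o s2 σ2 hlt]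
    intro hcon
    simpa [ltr] using congrArg Prod.snd hcon
  | false =>
    refine ⟨s1 + 1, by rw [length_P]; omega, by rw [length_P]; omega, ?_⟩
    rw [getElem_P_ge o s1 false (by omega) (by omega)]
    have hfst : ((P o s2 σ2)[s1+1]'(by rw [length_P]; omega)).1 = gen (s1 + 1 + o) := by
      rcases Nat.lt_or_ge (s1 + 1) s2 with h | h
      · rw [getElem_P_lt o s2 σ2 h]; rfl
      · have hs : s2 = s1 + 1 := by omega
        subst hs
        rw [getElem_P_ge o (s1+1) σ2 (le_refl _) (by omega)]
        rfl
    intro hcon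
    have := congrArg Prod.fst hcon
    rw [hfst] at this
    exact gen_succ_ne (s1 + o) (by rw [show s1 + o + 1 = s1 + 1 + o by ring, ← this]; rfl)

theorem exists_ne_letter {o1 s1 o2 s2 : ℕ} (σ1 σ2 : Bool) (ho1 : o1 < 2) (ho2 : o2 < 2)
    (hne : ¬ (o1 = o2 ∧ s1 = s2 ∧ σ1 = σ2)) :
    ∃ m, ∃ (h1 : m < (P o1 s1 σ1).length) (h2 : m < (P o2 s2 σ2).length),
      (P o1 s1 σ1)[m] ≠ (P o2 s2 σ2)[m] := by
  by_cases ho : o1 = o2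
  · subst ho
    by_cases hs : s1 = s2
    · subst hs
      have hσ : σ1 ≠ σ2 := fun h => hne ⟨rfl, rfl, h⟩
      refine ⟨s1, by rw [length_P]; omega, by rw [length_P]; omega, ?_⟩
      rw [getElem_P_ge o1 s1 σ1 (le_refl _) (by omega),
        getElem_P_ge o1 s1 σ2 (le_refl _) (by omega)]
      intro hcon
      exact hσ (by simpa [ltr] using congrArg Prod.snd hcon)
    · rcases Nat.lt_or_ge s1 s2 with h | h
      · exact aux_lt σ1 σ2 h
      · have h' : s2 < s1 := by omega
        obtain ⟨m, h1, h2, hm⟩ := aux_lt σ2 σ1 h' (o := o1)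
        exact ⟨m, h2, h1, hm.symm⟩
  · refine ⟨0, by rw [length_P]; omega, by rw [length_P]; omega, ?_⟩
    intro hcon
    have := congrArg Prod.fst hcon
    rw [fst_getElem_P_zero, fst_getElem_P_zero] at this
    apply ho
    have : o1 % 2 = o2 % 2 := congrArg Fin.val this
    omega

theorem disjoint_prefix {A B : List (Fin 2 × Bool)}
    (h : ∃ m, ∃ (h1 : m < A.length) (h2 : m < B.length), A[m] ≠ B[m]) :
    Disjoint {g : F2 | A <+: g.toWord} {g : F2 | B <+: g.toWord} := by
  obtain ⟨m, h1, h2, hne⟩ := h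
  rw [Set.disjoint_left]
  rintro g hA hB
  exact hne ((hA.getElem h1).trans (hB.getElem h2).symm)

theorem invRev_W (o s : ℕ) :
    FreeGroup.invRev (W o s) =
      U o s ++ [ltr (s + o) false, ltr (s + o) false, ltr (s + o) false]
        ++ FreeGroup.invRev (U o s) := by
  rw [W, invRev_append', invRev_append', invRev_invRev]
  have h3 : FreeGroup.invRev [ltr (s + o) true, ltr (s + o) true, ltr (s + o) true]
      = [ltr (s + o) false, ltr (s + o) false, ltr (s + o) false] := by
    simp [FreeGroup.invRev, ltr]
  rw [h3]
  simp

theorem stmt_5 (n : ℕ) (hn : 1 ≤ n) :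
    Function.Injective (FreeGroup.lift
      (Sum.elim (fun i : Fin n => (ab (i : ℕ)).1) (fun i : Fin n => (ab (i : ℕ)).2))) := by
  haveI : Nontrivial (Fin n ⊕ Fin n) :=
    ⟨⟨Sum.inl ⟨0, hn⟩, Sum.inr ⟨0, hn⟩, by simp⟩⟩
  set a : Fin n ⊕ Fin n → F2 :=
    Sum.elim (fun i : Fin n => (ab (i : ℕ)).1) (fun i : Fin n => (ab (i : ℕ)).2) with ha
  let o : Fin n ⊕ Fin n → ℕ := Sum.elim (fun _ => 0) (fun _ => 1)
  let sdx : Fin n ⊕ Fin n → ℕ := Sum.elim (fun i => (i : ℕ)) (fun i => (i : ℕ))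
  have ho : ∀ i, o i < 2 := by rintro (i | i) <;> simp [o]
  have hai : ∀ i, a i = FreeGroup.mk (W (o i) (sdx i)) := by
    rintro (i | i)
    · exact (ab_eq i).1
    · exact (ab_eq i).2
  have hkey : ∀ i j : Fin n ⊕ Fin n, i ≠ j → ¬ (o i = o j ∧ sdx i = sdx j) := by
    rintro (i | i) (j | j) hij ⟨h1, h2⟩
    · simp only [o, sdx, Sum.elim_inl] at h2
      exact hij (by rw [Fin.val_inj] at h2; rw [h2])
    · simp [o, sdx] at h1
    · simp [o, sdx] at h1
    · simp only [o, sdx, Sum.elim_inr] at h2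
      exact hij (by rw [Fin.val_inj] at h2; rw [h2])
  apply FreeGroup.injective_lift_of_ping_pong a
    (fun i => {h : F2 | P (o i) (sdx i) true <+: h.toWord})
    (fun i => {h : F2 | P (o i) (sdx i) false <+: h.toWord})
  · -- nonempty
    intro i
    refine ⟨FreeGroup.mk (P (o i) (sdx i) true), ?_⟩
    show P (o i) (sdx i) true <+: _
    rw [toWord_mk_of_chain (chain_P _ _ _)]
  · -- X pairwise disjoint
    intro i j hij
    exact disjoint_prefix (exists_ne_letter true true (ho i) (ho j)
      (fun h => hkey i j hij ⟨h.1, h.2.1⟩))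
  · -- Y pairwise disjoint
    intro i j hij
    exact disjoint_prefix (exists_ne_letter false false (ho i) (ho j)
      (fun h => hkey i j hij ⟨h.1, h.2.1⟩))
  · -- X vs Y disjoint
    intro i j
    exact disjoint_prefix (exists_ne_letter true false (ho i) (ho j)
      (fun h => by simpa using h.2.2))
  · -- hX
    intro i z hz
    rw [Set.mem_smul_set] at hz
    obtain ⟨h, hh, rfl⟩ := hz
    rw [Set.mem_compl_iff] at hh
    show P (o i) (sdx i) true <+: (a i • h).toWord
    rw [smul_eq_mul, hai i]
    exact core (chain_U (o i) (sdx i)) (lastU (o i) (sdx i)) h hh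
  · -- hY
    intro i z hz
    rw [Set.mem_smul_set] at hz
    obtain ⟨h, hh, rfl⟩ := hz
    rw [Set.mem_compl_iff] at hh
    show P (o i) (sdx i) false <+: ((a⁻¹ i) • h).toWord
    rw [smul_eq_mul, Pi.inv_apply, hai i, FreeGroup.inv_mk, invRev_W]
    exact core (chain_U (o i) (sdx i)) (lastU (o i) (sdx i)) h hh

end Stmt5
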